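/- arXiv:0808.2724 — 2 statements merged into one kernel-verified Lean document; each statement's English description precedes it below -/
import Mathlib

section
/- For every ε > 0 and Ω ≥ 0, the two-dimensional Thomas–Fermi functional 𝓔^TF attains its infimum over the admissible class at the density ρ^TF(x) = (ε²/2) · max(μ + (Ω²/4)|x|², 0) for x ∈ D, where μ ∈ ℝ is the unique real number for which ∫_D ρ^TF = 1; this minimizer is unique up to sets of Lebesgue measure zero. -/
open MeasureTheory Filter Topology

set_option maxHeartbeats 1000000

noncomputable section

/-- The plane `ℝ²`. -/
abbrev E2 := EuclideanSpace ℝ (Fin 2)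

/-- The closed unit disc `D ⊂ ℝ²`. -/
def unitDisc : Set E2 := Metric.closedBall 0 1

/-- The integrand of the 2D Thomas–Fermi functional: `−(Ω²/4)|x|²ρ + ε⁻²ρ²`. -/
def tfIntegrand2 (ε Ω : ℝ) (ρ : E2 → ℝ) (x : E2) : ℝ :=
  -(Ω ^ 2 / 4) * ‖x‖ ^ 2 * ρ x + (1 / ε ^ 2) * ρ x ^ 2

/-- Admissible densities for the 2D Thomas–Fermi problem. -/
def tfAdmissible2 (ρ : E2 → ℝ) : Prop :=
  Measurable ρ ∧ (∀ x, 0 ≤ ρ x) ∧ IntegrableOn ρ unitDisc ∧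
    IntegrableOn (fun x => ρ x ^ 2) unitDisc ∧ (∫ x in unitDisc, ρ x) = 1

/-- The 2D Thomas–Fermi energy `E^TF(ε,Ω)`. -/
def ETF2 (ε Ω : ℝ) : ℝ :=
  sInf { e | ∃ ρ : E2 → ℝ, tfAdmissible2 ρ ∧ e = ∫ x in unitDisc, tfIntegrand2 ε Ω ρ x }

/-- The candidate Thomas–Fermi minimizer with chemical potential `μ`:
`ρ^TF(x) = (ε²/2) [μ + (Ω²/4)|x|²]₊`. -/
def rhoTF2 (ε Ω μ : ℝ) (x : E2) : ℝ :=
  ε ^ 2 / 2 * max (μ + Ω ^ 2 / 4 * ‖x‖ ^ 2) 0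

namespace TF2Aux

lemma disc_compact : IsCompact unitDisc := isCompact_closedBall 0 1

lemma disc_meas : MeasurableSet unitDisc := measurableSet_closedBall

lemma disc_vol_lt_top : volume unitDisc < ⊤ := measure_closedBall_lt_top

lemma disc_vol_pos : 0 < (volume unitDisc).toReal := by
  have h : 0 < volume unitDisc :=
    lt_of_lt_of_le (Metric.measure_ball_pos volume 0 one_pos)
      (measure_mono Metric.ball_subset_closedBall)
  exact ENNReal.toReal_pos h.ne' disc_vol_lt_top.ne

lemma norm_le_of_mem {x : E2} (hx : x ∈ unitDisc) : ‖x‖ ≤ 1 := by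
  simpa [unitDisc, mem_closedBall_zero_iff] using hx

lemma rhoTF2_cont (ε Ω μ : ℝ) : Continuous (rhoTF2 ε Ω μ) := by
  unfold rhoTF2; fun_prop

lemma rhoTF2_nonneg (ε Ω μ : ℝ) (x : E2) : 0 ≤ rhoTF2 ε Ω μ x :=
  mul_nonneg (by positivity) (le_max_right _ _)

lemma rhoTF2_int (ε Ω μ : ℝ) : IntegrableOn (rhoTF2 ε Ω μ) unitDisc :=
  ContinuousOn.integrableOn_compact disc_compact (rhoTF2_cont ε Ω μ).continuousOn

lemma rhoTF2_sq_int (ε Ω μ : ℝ) :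
    IntegrableOn (fun x => rhoTF2 ε Ω μ x ^ 2) unitDisc :=
  ContinuousOn.integrableOn_compact disc_compact
    ((rhoTF2_cont ε Ω μ).pow 2).continuousOn

lemma tfI_rhoTF2_int (ε Ω μ : ℝ) :
    IntegrableOn (tfIntegrand2 ε Ω (rhoTF2 ε Ω μ)) unitDisc := by
  have h := rhoTF2_cont ε Ω μ
  have hc : Continuous (tfIntegrand2 ε Ω (rhoTF2 ε Ω μ)) := by
    unfold tfIntegrand2
    fun_prop
  exact ContinuousOn.integrableOn_compact disc_compact hc.continuousOn

lemma tfI_int (ε Ω : ℝ) {ρ : E2 → ℝ} (hm : Measurable ρ)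
    (hint : IntegrableOn ρ unitDisc) (hsq : IntegrableOn (fun x => ρ x ^ 2) unitDisc) :
    IntegrableOn (tfIntegrand2 ε Ω ρ) unitDisc := by
  have h1 : IntegrableOn (fun x => -(Ω ^ 2 / 4) * ‖x‖ ^ 2 * ρ x) unitDisc := by
    apply Integrable.mono ((hint.abs).const_mul (Ω ^ 2 / 4))
      (by fun_prop : Measurable fun x => -(Ω ^ 2 / 4) * ‖x‖ ^ 2 * ρ x).aestronglyMeasurable
    rw [ae_restrict_iff' disc_meas]
    refine Eventually.of_forall fun x hx => ?_
    have hn : ‖x‖ ≤ 1 := norm_le_of_mem hx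
    have hn2 : ‖x‖ ^ 2 ≤ 1 := by nlinarith [norm_nonneg x]
    have hΩ4 : (0:ℝ) ≤ Ω ^ 2 / 4 := by positivity
    rw [Real.norm_eq_abs, Real.norm_eq_abs, abs_mul, abs_mul, abs_mul, abs_neg,
      abs_of_nonneg hΩ4, abs_of_nonneg (sq_nonneg ‖x‖), abs_abs]
    have h5 : ‖x‖ ^ 2 * (Ω ^ 2 / 4 * |ρ x|) ≤ 1 * (Ω ^ 2 / 4 * |ρ x|) :=
      mul_le_mul_of_nonneg_right hn2 (mul_nonneg hΩ4 (abs_nonneg _))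
    nlinarith [h5]
  have h2 : IntegrableOn (fun x => (1 / ε ^ 2) * ρ x ^ 2) unitDisc :=
    hsq.const_mul _
  exact h1.add h2

lemma sqdiff_int (ε Ω μ : ℝ) {ρ : E2 → ℝ} (hm : Measurable ρ)
    (hsq : IntegrableOn (fun x => ρ x ^ 2) unitDisc) :
    IntegrableOn (fun x => (ρ x - rhoTF2 ε Ω μ x) ^ 2) unitDisc := by
  have hg : IntegrableOn
      (fun x => 2 * ρ x ^ 2 + 2 * rhoTF2 ε Ω μ x ^ 2) unitDisc :=
    (hsq.const_mul 2).add ((rhoTF2_sq_int ε Ω μ).const_mul 2)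
  apply Integrable.mono hg
    (by have := rhoTF2_cont ε Ω μ; fun_prop :
      Measurable fun x => (ρ x - rhoTF2 ε Ω μ x) ^ 2).aestronglyMeasurable
  refine Eventually.of_forall fun x => ?_
  rw [Real.norm_eq_abs, Real.norm_eq_abs, abs_of_nonneg (sq_nonneg _),
    abs_of_nonneg (by positivity)]
  nlinarith [sq_nonneg (ρ x + rhoTF2 ε Ω μ x)]

lemma ptwise {ε : ℝ} (hε : 0 < ε) (c t : ℝ) (ht : 0 ≤ t) :
    (1 / ε ^ 2) * (ε ^ 2 / 2 * max c 0) ^ 2 - c * (ε ^ 2 / 2 * max c 0)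
      + (1 / ε ^ 2) * (t - ε ^ 2 / 2 * max c 0) ^ 2
      ≤ (1 / ε ^ 2) * t ^ 2 - c * t := by
  have hε2 : (0:ℝ) < ε ^ 2 := by positivity
  rcases le_total c 0 with h | h
  · rw [max_eq_right h]
    have h1 : 0 ≤ -c * t := mul_nonneg (neg_nonneg.2 h) ht
    have h2 : 0 < 1 / ε ^ 2 := by positivity
    nlinarith
  · rw [max_eq_left h]
    have e : (1 / ε ^ 2) * (ε ^ 2 / 2 * c) ^ 2 - c * (ε ^ 2 / 2 * c)
        + (1 / ε ^ 2) * (t - ε ^ 2 / 2 * c) ^ 2 = (1 / ε ^ 2) * t ^ 2 - c * t := by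
      field_simp
      ring
    rw [e]

lemma ptwise' (ε Ω μ : ℝ) (hε : 0 < ε) (ρ : E2 → ℝ) (hρ : ∀ x, 0 ≤ ρ x) (x : E2) :
    tfIntegrand2 ε Ω (rhoTF2 ε Ω μ) x - μ * rhoTF2 ε Ω μ x
      + (1 / ε ^ 2) * (ρ x - rhoTF2 ε Ω μ x) ^ 2
      ≤ tfIntegrand2 ε Ω ρ x - μ * ρ x := by
  have h := ptwise hε (μ + Ω ^ 2 / 4 * ‖x‖ ^ 2) (ρ x) (hρ x)
  have idL : tfIntegrand2 ε Ω (rhoTF2 ε Ω μ) x - μ * rhoTF2 ε Ω μ x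
      = (1 / ε ^ 2) * (rhoTF2 ε Ω μ x) ^ 2
        - (μ + Ω ^ 2 / 4 * ‖x‖ ^ 2) * rhoTF2 ε Ω μ x := by
    simp only [tfIntegrand2]; ring
  have idR : tfIntegrand2 ε Ω ρ x - μ * ρ x
      = (1 / ε ^ 2) * ρ x ^ 2 - (μ + Ω ^ 2 / 4 * ‖x‖ ^ 2) * ρ x := by
    simp only [tfIntegrand2]; ring
  rw [idL, idR,
    show rhoTF2 ε Ω μ x = ε ^ 2 / 2 * max (μ + Ω ^ 2 / 4 * ‖x‖ ^ 2) 0 from rfl]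
  linarith [h]

lemma key_ineq (ε Ω μ : ℝ) (hε : 0 < ε)
    (hnorm : (∫ x in unitDisc, rhoTF2 ε Ω μ x) = 1)
    (ρ : E2 → ℝ) (hadm : tfAdmissible2 ρ) :
    (∫ x in unitDisc, tfIntegrand2 ε Ω (rhoTF2 ε Ω μ) x)
      + (1 / ε ^ 2) * (∫ x in unitDisc, (ρ x - rhoTF2 ε Ω μ x) ^ 2)
      ≤ ∫ x in unitDisc, tfIntegrand2 ε Ω ρ x := by
  obtain ⟨hm, hnn, hint, hsq, hone⟩ := hadm
  have hT := tfI_rhoTF2_int ε Ω μ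
  have hR := rhoTF2_int ε Ω μ
  have hS := sqdiff_int ε Ω μ hm hsq
  have hTρ := tfI_int ε Ω hm hint hsq
  have Ia : IntegrableOn (fun x => μ * rhoTF2 ε Ω μ x) unitDisc := hR.const_mul μ
  have Ic : IntegrableOn (fun x => (1 / ε ^ 2) * (ρ x - rhoTF2 ε Ω μ x) ^ 2) unitDisc :=
    hS.const_mul _
  have Id : IntegrableOn (fun x => μ * ρ x) unitDisc := hint.const_mul μ
  have Ib : IntegrableOn (fun x => tfIntegrand2 ε Ω (rhoTF2 ε Ω μ) x - μ * rhoTF2 ε Ω μ x)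
      unitDisc := hT.sub Ia
  have Ie : IntegrableOn (fun x => tfIntegrand2 ε Ω ρ x - μ * ρ x) unitDisc := hTρ.sub Id
  have I1 : IntegrableOn (fun x => tfIntegrand2 ε Ω (rhoTF2 ε Ω μ) x - μ * rhoTF2 ε Ω μ x
      + (1 / ε ^ 2) * (ρ x - rhoTF2 ε Ω μ x) ^ 2) unitDisc := Ib.add Ic
  have hmono : (∫ x in unitDisc, (tfIntegrand2 ε Ω (rhoTF2 ε Ω μ) x - μ * rhoTF2 ε Ω μ x
      + (1 / ε ^ 2) * (ρ x - rhoTF2 ε Ω μ x) ^ 2))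
      ≤ ∫ x in unitDisc, (tfIntegrand2 ε Ω ρ x - μ * ρ x) :=
    integral_mono I1 Ie fun x => ptwise' ε Ω μ hε ρ hnn x
  rw [integral_add Ib Ic, integral_sub hT Ia, integral_sub hTρ Id,
    integral_const_mul, integral_const_mul, integral_const_mul, hnorm, hone] at hmono
  linarith

lemma rhoTF2_admissible (ε Ω μ : ℝ)
    (hnorm : (∫ x in unitDisc, rhoTF2 ε Ω μ x) = 1) :
    tfAdmissible2 (rhoTF2 ε Ω μ) :=
  ⟨(rhoTF2_cont ε Ω μ).measurable, rhoTF2_nonneg ε Ω μ, rhoTF2_int ε Ω μ,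
    rhoTF2_sq_int ε Ω μ, hnorm⟩

lemma energy_eq (ε Ω μ : ℝ) (hε : 0 < ε)
    (hnorm : (∫ x in unitDisc, rhoTF2 ε Ω μ x) = 1) :
    (∫ x in unitDisc, tfIntegrand2 ε Ω (rhoTF2 ε Ω μ) x) = ETF2 ε Ω := by
  set S := { e | ∃ ρ : E2 → ℝ, tfAdmissible2 ρ ∧ e = ∫ x in unitDisc, tfIntegrand2 ε Ω ρ x }
  have hmem : (∫ x in unitDisc, tfIntegrand2 ε Ω (rhoTF2 ε Ω μ) x) ∈ S :=
    ⟨rhoTF2 ε Ω μ, rhoTF2_admissible ε Ω μ hnorm, rfl⟩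
  have hlb : ∀ e ∈ S, (∫ x in unitDisc, tfIntegrand2 ε Ω (rhoTF2 ε Ω μ) x) ≤ e := by
    rintro e ⟨ρ, hadm, rfl⟩
    have h := key_ineq ε Ω μ hε hnorm ρ hadm
    have h2 : 0 ≤ (1 / ε ^ 2) * (∫ x in unitDisc, (ρ x - rhoTF2 ε Ω μ x) ^ 2) :=
      mul_nonneg (by positivity) (integral_nonneg fun x => sq_nonneg _)
    linarith
  exact le_antisymm (le_csInf ⟨_, hmem⟩ hlb) (csInf_le ⟨_, hlb⟩ hmem)

lemma F_lip (ε Ω μ₁ μ₂ : ℝ) :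
    |(∫ x in unitDisc, rhoTF2 ε Ω μ₁ x) - ∫ x in unitDisc, rhoTF2 ε Ω μ₂ x|
      ≤ (ε ^ 2 / 2 * (volume unitDisc).toReal) * |μ₁ - μ₂| := by
  rw [← integral_sub (rhoTF2_int ε Ω μ₁) (rhoTF2_int ε Ω μ₂)]
  have hb : ∀ x ∈ unitDisc,
      ‖rhoTF2 ε Ω μ₁ x - rhoTF2 ε Ω μ₂ x‖ ≤ ε ^ 2 / 2 * |μ₁ - μ₂| := by
    intro x _
    have h1 : rhoTF2 ε Ω μ₁ x - rhoTF2 ε Ω μ₂ x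
        = ε ^ 2 / 2 * (max (μ₁ + Ω ^ 2 / 4 * ‖x‖ ^ 2) 0
          - max (μ₂ + Ω ^ 2 / 4 * ‖x‖ ^ 2) 0) := by
      simp only [rhoTF2]; ring
    rw [h1, Real.norm_eq_abs, abs_mul, abs_of_nonneg (by positivity : (0:ℝ) ≤ ε ^ 2 / 2)]
    have h2 := abs_max_sub_max_le_abs (μ₁ + Ω ^ 2 / 4 * ‖x‖ ^ 2)
      (μ₂ + Ω ^ 2 / 4 * ‖x‖ ^ 2) 0
    have h3 : μ₁ + Ω ^ 2 / 4 * ‖x‖ ^ 2 - (μ₂ + Ω ^ 2 / 4 * ‖x‖ ^ 2) = μ₁ - μ₂ := by ring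
    rw [h3] at h2
    exact mul_le_mul_of_nonneg_left h2 (by positivity)
  have := norm_setIntegral_le_of_norm_le_const disc_vol_lt_top hb
  rw [Real.norm_eq_abs] at this
  calc |∫ x in unitDisc, (rhoTF2 ε Ω μ₁ x - rhoTF2 ε Ω μ₂ x)|
      ≤ ε ^ 2 / 2 * |μ₁ - μ₂| * (volume unitDisc).toReal := this
    _ = (ε ^ 2 / 2 * (volume unitDisc).toReal) * |μ₁ - μ₂| := by ring

lemma F_cont (ε Ω : ℝ) :
    Continuous (fun μ => ∫ x in unitDisc, rhoTF2 ε Ω μ x) := by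
  apply LipschitzWith.continuous
    (K := Real.toNNReal (ε ^ 2 / 2 * (volume unitDisc).toReal))
  apply LipschitzWith.of_dist_le_mul
  intro μ₁ μ₂
  rw [Real.dist_eq, Real.dist_eq]
  refine le_trans (F_lip ε Ω μ₁ μ₂) ?_
  exact mul_le_mul_of_nonneg_right (Real.le_coe_toNNReal _) (abs_nonneg _)

lemma F_at_a (ε Ω : ℝ) (hΩ : 0 ≤ Ω) :
    (∫ x in unitDisc, rhoTF2 ε Ω (-(Ω ^ 2 / 4) - 1) x) = 0 := by
  rw [setIntegral_congr_fun disc_meas (g := fun _ => (0:ℝ)) ?_]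
  · simp
  · intro x hx
    have hn : ‖x‖ ≤ 1 := norm_le_of_mem hx
    have hn2 : ‖x‖ ^ 2 ≤ 1 := by nlinarith [norm_nonneg x]
    have hc : -(Ω ^ 2 / 4) - 1 + Ω ^ 2 / 4 * ‖x‖ ^ 2 ≤ 0 := by nlinarith [sq_nonneg Ω]
    simp only [rhoTF2, max_eq_right hc, mul_zero]

lemma F_lb (ε Ω μ : ℝ) :
    ε ^ 2 / 2 * μ * (volume unitDisc).toReal ≤ ∫ x in unitDisc, rhoTF2 ε Ω μ x := by
  have h := setIntegral_mono_on (μ := volume) (f := fun _ => ε ^ 2 / 2 * μ)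
    (g := rhoTF2 ε Ω μ)
    (integrableOn_const disc_vol_lt_top.ne enorm_ne_top) (rhoTF2_int ε Ω μ) disc_meas
    (fun x _ => by
      have h1 : μ ≤ max (μ + Ω ^ 2 / 4 * ‖x‖ ^ 2) 0 :=
        le_trans (le_add_of_nonneg_right (by positivity)) (le_max_left _ _)
      exact mul_le_mul_of_nonneg_left h1 (by positivity))
  rw [setIntegral_const, smul_eq_mul,
    show volume.real unitDisc = (volume unitDisc).toReal from rfl] at h
  nlinarith [h]

lemma exists_mu (ε Ω : ℝ) (hε : 0 < ε) (hΩ : 0 ≤ Ω) :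
    ∃ μ : ℝ, (∫ x in unitDisc, rhoTF2 ε Ω μ x) = 1 := by
  set m := (volume unitDisc).toReal with hm
  have hmpos : 0 < m := disc_vol_pos
  set a : ℝ := -(Ω ^ 2 / 4) - 1 with ha
  set b : ℝ := 2 / (ε ^ 2 * m) with hb
  have hbpos : (0:ℝ) < b := by rw [hb]; positivity
  have hab : a ≤ b := by
    have ha0 : a ≤ 0 := by rw [ha]; nlinarith [sq_nonneg Ω]
    linarith
  have hFb : (1:ℝ) ≤ ∫ x in unitDisc, rhoTF2 ε Ω b x := by
    have h := F_lb ε Ω b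
    have he : ε ^ 2 / 2 * b * m = 1 := by
      rw [hb]; field_simp
    linarith
  have h1 : (1:ℝ) ∈ Set.Icc (∫ x in unitDisc, rhoTF2 ε Ω a x)
      (∫ x in unitDisc, rhoTF2 ε Ω b x) := by
    constructor
    · rw [F_at_a ε Ω hΩ]; norm_num
    · exact hFb
  obtain ⟨μ, _, hμ⟩ := intermediate_value_Icc hab (F_cont ε Ω).continuousOn h1
  exact ⟨μ, hμ⟩

lemma no_two (ε Ω μ₁ μ₂ : ℝ) (hε : 0 < ε) (h : μ₁ < μ₂)
    (h₁ : (∫ x in unitDisc, rhoTF2 ε Ω μ₁ x) = 1)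
    (h₂ : (∫ x in unitDisc, rhoTF2 ε Ω μ₂ x) = 1) : False := by
  have hint₁ := rhoTF2_int ε Ω μ₁
  have hint₂ := rhoTF2_int ε Ω μ₂
  have hdiff0 : ∫ x in unitDisc, (rhoTF2 ε Ω μ₂ x - rhoTF2 ε Ω μ₁ x) = 0 := by
    rw [integral_sub hint₂ hint₁, h₁, h₂]; ring
  have hnn : 0 ≤ fun x => rhoTF2 ε Ω μ₂ x - rhoTF2 ε Ω μ₁ x := by
    intro x
    have : max (μ₁ + Ω ^ 2 / 4 * ‖x‖ ^ 2) 0 ≤ max (μ₂ + Ω ^ 2 / 4 * ‖x‖ ^ 2) 0 :=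
      max_le_max (by linarith) le_rfl
    simp only [rhoTF2, Pi.zero_apply]
    nlinarith [sq_nonneg ε]
  have hae := (integral_eq_zero_iff_of_nonneg hnn (hint₂.sub hint₁)).1 hdiff0
  have hae2 : rhoTF2 ε Ω μ₁ =ᶠ[ae (volume.restrict unitDisc)] 0 := by
    filter_upwards [hae] with x hx
    simp only [Pi.zero_apply] at hx ⊢
    set c₁ := μ₁ + Ω ^ 2 / 4 * ‖x‖ ^ 2 with hc₁
    have hc₂ : μ₂ + Ω ^ 2 / 4 * ‖x‖ ^ 2 = c₁ + (μ₂ - μ₁) := by ring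
    rcases le_total c₁ 0 with hc | hc
    · simp only [rhoTF2, ← hc₁, max_eq_right hc, mul_zero]
    · exfalso
      have hc₂pos : 0 ≤ c₁ + (μ₂ - μ₁) := by linarith
      simp only [rhoTF2, ← hc₁, hc₂, max_eq_left hc, max_eq_left hc₂pos] at hx
      have hε2 : (0:ℝ) < ε ^ 2 := by positivity
      nlinarith [hx]
  have hzero : (∫ x in unitDisc, rhoTF2 ε Ω μ₁ x) = 0 := by
    rw [integral_congr_ae hae2]; simp
  rw [h₁] at hzero
  exact one_ne_zero hzero

end TF2Aux

/-- **The 2D Thomas–Fermi functional attains its infimum at the explicit density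
`ρ^TF(x) = (ε²/2)[μ + (Ω²/4)|x|²]₊`**, where `μ` is the unique real number normalizing
`∫_D ρ^TF = 1`; moreover the minimizer is unique up to sets of Lebesgue measure zero. -/
theorem tf2_minimizer (ε Ω : ℝ) (hε : 0 < ε) (hΩ : 0 ≤ Ω) :
    (∃! μ : ℝ, (∫ x in unitDisc, rhoTF2 ε Ω μ x) = 1) ∧
    ∀ μ : ℝ, (∫ x in unitDisc, rhoTF2 ε Ω μ x) = 1 →
      tfAdmissible2 (rhoTF2 ε Ω μ) ∧
      (∫ x in unitDisc, tfIntegrand2 ε Ω (rhoTF2 ε Ω μ) x) = ETF2 ε Ω ∧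
      ∀ ρ : E2 → ℝ, tfAdmissible2 ρ →
        (∫ x in unitDisc, tfIntegrand2 ε Ω ρ x) = ETF2 ε Ω →
          ∀ᵐ x ∂volume.restrict unitDisc, ρ x = rhoTF2 ε Ω μ x := by
  constructor
  · obtain ⟨μ, hμ⟩ := TF2Aux.exists_mu ε Ω hε hΩ
    refine ⟨μ, hμ, fun y hy => ?_⟩
    rcases lt_trichotomy y μ with h | h | h
    · exact absurd (TF2Aux.no_two ε Ω y μ hε h hy hμ) not_false
    · exact h
    · exact absurd (TF2Aux.no_two ε Ω μ y hε h hμ hy) not_false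
  · intro μ hnorm
    refine ⟨TF2Aux.rhoTF2_admissible ε Ω μ hnorm, TF2Aux.energy_eq ε Ω μ hε hnorm, ?_⟩
    intro ρ hadm hρE
    have hkey := TF2Aux.key_ineq ε Ω μ hε hnorm ρ hadm
    have henergy := TF2Aux.energy_eq ε Ω μ hε hnorm
    have hSint := TF2Aux.sqdiff_int ε Ω μ hadm.1 hadm.2.2.2.1
    have hInn : 0 ≤ ∫ x in unitDisc, (ρ x - rhoTF2 ε Ω μ x) ^ 2 :=
      integral_nonneg fun x => sq_nonneg _
    have hIle : (∫ x in unitDisc, (ρ x - rhoTF2 ε Ω μ x) ^ 2) ≤ 0 := by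
      have hε2 : (0:ℝ) < 1 / ε ^ 2 := by positivity
      nlinarith [hkey, henergy, hρE]
    have hI0 : (∫ x in unitDisc, (ρ x - rhoTF2 ε Ω μ x) ^ 2) = 0 :=
      le_antisymm hIle hInn
    have hae := (integral_eq_zero_iff_of_nonneg (fun x => sq_nonneg _) hSint).1 hI0
    filter_upwards [hae] with x hx
    simp only [Pi.zero_apply] at hx
    have := sq_eq_zero_iff.1 hx
    linarith [this]
end
end

section
/- Let ρ^TF be the minimizer of the two-dimensional Thomas–Fermi functional with chemical potential μ. If Ω ≤ 4/(√π ε) then μ = 2/(π ε²) − Ω²/8 ≥ 0 and ρ^TF(x) > 0 for almost every x ∈ D; if Ω > 4/(√π ε) then μ < 0 and ρ^TF vanishes identically on the open disc of radius 2√(−μ)/Ω centered at the origin (the density develops a 'hole'). -/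
open MeasureTheory Filter Topology

noncomputable section

lemma volD : volume unitDisc = ENNReal.ofReal Real.pi := by
  rw [unitDisc, EuclideanSpace.volume_closedBall]
  simp [Real.sq_sqrt Real.pi_nonneg]
  norm_num [Real.Gamma_two]

lemma intNormSq : ∫ x in unitDisc, ‖x‖^2 = Real.pi / 2 := by
  have h := MeasureTheory.integral_fun_norm_addHaar (volume : Measure E2)
    (fun y => if y ≤ 1 then y^2 else 0)
  have hL : (∫ x : E2, if ‖x‖ ≤ 1 then ‖x‖^2 else 0)
      = ∫ x in unitDisc, ‖x‖^2 := by
    rw [unitDisc, ← integral_indicator measurableSet_closedBall]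
    congr 1
    funext x
    by_cases hx : ‖x‖ ≤ 1
    · simp [Set.indicator_apply, mem_closedBall_zero_iff, hx]
    · simp [Set.indicator_apply, mem_closedBall_zero_iff, hx]
  have hdim : Module.finrank ℝ E2 = 2 := by simp [finrank_euclideanSpace]
  have hvol : (volume (Metric.ball (0:E2) 1)).toReal = Real.pi := by
    rw [EuclideanSpace.volume_ball]
    simp [Real.sq_sqrt Real.pi_nonneg]
    norm_num [Real.Gamma_two]
    exact Real.pi_nonneg
  have hR : (∫ y in Set.Ioi (0:ℝ), y ^ (2 - 1) •
      (if y ≤ 1 then y^2 else 0 : ℝ)) = 1/4 := by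
    have heq : ∀ y : ℝ, y ^ (2-1) • (if y ≤ 1 then y^2 else 0 : ℝ) =
        (Set.Iic (1:ℝ)).indicator (fun y => y^3) y := by
      intro y
      by_cases hy : y ≤ 1 <;> simp [hy, Set.indicator_apply] <;> ring
    simp_rw [heq]
    rw [setIntegral_indicator measurableSet_Iic]
    have : Set.Ioi (0:ℝ) ∩ Set.Iic 1 = Set.Ioc 0 1 := by ext y; simp [and_comm]
    rw [this, ← intervalIntegral.integral_of_le (by norm_num : (0:ℝ) ≤ 1)]
    simp [integral_pow]
    norm_num
  rw [hL, hdim, measureReal_def, hvol] at h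
  rw [hR] at h
  rw [h]
  simp
  ring

lemma contRho (ε Ω μ : ℝ) : Continuous (rhoTF2 ε Ω μ) := by
  unfold rhoTF2
  fun_prop

lemma intableRho (ε Ω μ : ℝ) : IntegrableOn (rhoTF2 ε Ω μ) unitDisc := by
  exact (contRho ε Ω μ).continuousOn.integrableOn_compact
    (isCompact_closedBall 0 1)

lemma intableNormSq : IntegrableOn (fun x : E2 => ‖x‖^2) unitDisc := by
  refine ContinuousOn.integrableOn_compact (isCompact_closedBall 0 1) ?_
  fun_prop

lemma intRho (ε Ω μ : ℝ) (hm : 0 ≤ μ) :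
    ∫ x in unitDisc, rhoTF2 ε Ω μ x
      = ε^2/2 * (μ * Real.pi + Ω^2/4 * (Real.pi/2)) := by
  have h1 : ∀ x : E2, rhoTF2 ε Ω μ x
      = ε^2/2 * μ + (ε^2/2 * (Ω^2/4)) * ‖x‖^2 := by
    intro x
    have : max (μ + Ω ^ 2 / 4 * ‖x‖ ^ 2) 0 = μ + Ω ^ 2 / 4 * ‖x‖ ^ 2 :=
      max_eq_left (by positivity)
    rw [rhoTF2, this]; ring
  simp_rw [h1]
  rw [integral_add (by exact integrableOn_const (by rw [volD]; exact ENNReal.ofReal_ne_top))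
      (by exact intableNormSq.const_mul _), setIntegral_const, measureReal_def, volD,
      ENNReal.toReal_ofReal Real.pi_nonneg, MeasureTheory.integral_const_mul, intNormSq]
  simp [smul_eq_mul]
  ring


/-- **Parabolic profile versus 'hole' for the 2D Thomas–Fermi minimizer.**
Let `μ` be the chemical potential normalizing `ρ^TF`. If `Ω ≤ 4/(√π ε)` then
`μ = 2/(π ε²) − Ω²/8 ≥ 0` and `ρ^TF > 0` a.e. on the disc; if `Ω > 4/(√π ε)` then
`μ < 0` and `ρ^TF` vanishes on the open disc of radius `2√(−μ)/Ω` (the density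
develops a 'hole'). -/
theorem tf2_minimizer_hole (ε Ω μ : ℝ) (hε : 0 < ε) (hΩ : 0 ≤ Ω)
    (hμ : (∫ x in unitDisc, rhoTF2 ε Ω μ x) = 1) :
    (Ω ≤ 4 / (Real.sqrt Real.pi * ε) →
      μ = 2 / (Real.pi * ε ^ 2) - Ω ^ 2 / 8 ∧ 0 ≤ μ ∧
      ∀ᵐ x ∂volume.restrict unitDisc, 0 < rhoTF2 ε Ω μ x) ∧
    (4 / (Real.sqrt Real.pi * ε) < Ω →
      μ < 0 ∧ ∀ x : E2, ‖x‖ < 2 * Real.sqrt (-μ) / Ω → rhoTF2 ε Ω μ x = 0) := by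
  have hπ := Real.pi_pos
  have hε2 : (0:ℝ) < ε^2 := by positivity
  have hsq : (4 / (Real.sqrt Real.pi * ε))^2 = 16 / (Real.pi * ε^2) := by
    rw [div_pow, mul_pow, Real.sq_sqrt Real.pi_nonneg]
    norm_num
  have hbpos : 0 < 4 / (Real.sqrt Real.pi * ε) := by positivity
  -- formula when μ ≥ 0
  have hformula : 0 ≤ μ → μ = 2 / (Real.pi * ε ^ 2) - Ω ^ 2 / 8 := by
    intro hm
    have h := (intRho ε Ω μ hm).symm.trans hμ
    field_simp at h ⊢
    nlinarith [h]
  constructor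
  · intro hle
    have hΩ2 : Ω^2 ≤ 16 / (Real.pi * ε^2) := by
      calc Ω^2 ≤ (4 / (Real.sqrt Real.pi * ε))^2 := by
            exact pow_le_pow_left₀ hΩ hle 2
        _ = _ := hsq
    -- first show 0 ≤ μ
    have hm : 0 ≤ μ := by
      by_contra hneg
      push_neg at hneg
      rcases eq_or_lt_of_le hΩ with hΩ0 | hΩpos
      · -- Ω = 0 : ρ ≡ 0
        have : ∀ x : E2, rhoTF2 ε Ω μ x = 0 := by
          intro x
          rw [rhoTF2, ← hΩ0]
          rw [max_eq_right (by nlinarith)]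
          ring
        simp_rw [this] at hμ
        simp at hμ
      · -- Ω > 0 : strict comparison
        set g : E2 → ℝ := fun x => ε^2/2 * (Ω^2/4) * ‖x‖^2 - rhoTF2 ε Ω μ x with hg
        have hg0 : ∀ x, 0 ≤ g x := by
          intro x
          have : max (μ + Ω ^ 2 / 4 * ‖x‖ ^ 2) 0 ≤ Ω ^ 2 / 4 * ‖x‖ ^ 2 :=
            max_le (by nlinarith) (by positivity)
          simp only [hg, rhoTF2]
          nlinarith
        have hgint : IntegrableOn g unitDisc :=
          ((intableNormSq.const_mul _).sub (intableRho ε Ω μ))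
        have hgpos : ∀ x : E2, x ≠ 0 → 0 < g x := by
          intro x hx
          have hn : 0 < ‖x‖ := norm_pos_iff.2 hx
          have h1 : 0 < Ω ^ 2 / 4 * ‖x‖ ^ 2 := by positivity
          have : max (μ + Ω ^ 2 / 4 * ‖x‖ ^ 2) 0 < Ω ^ 2 / 4 * ‖x‖ ^ 2 :=
            max_lt (by nlinarith) h1
          simp only [hg, rhoTF2]
          nlinarith
        have hsupp : 0 < volume (Function.support g ∩ unitDisc) := by
          have hss : unitDisc \ {0} ⊆ Function.support g ∩ unitDisc := by
            intro x hx
            exact ⟨fun h0 => (hgpos x hx.2).ne' h0, hx.1⟩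
          calc (0:ENNReal) < volume (unitDisc \ {0}) := by
                rw [measure_diff_null (measure_singleton 0), volD]
                exact ENNReal.ofReal_pos.2 hπ
            _ ≤ _ := measure_mono hss
        have hpos : 0 < ∫ x in unitDisc, g x := by
          rw [setIntegral_pos_iff_support_of_nonneg_ae
            (Filter.Eventually.of_forall hg0) hgint]
          exact hsupp
        have hint : ∫ x in unitDisc, g x
            = ε^2/2 * (Ω^2/4) * (Real.pi/2) - 1 := by
          simp only [hg]
          rw [integral_sub (intableNormSq.const_mul _) (intableRho ε Ω μ),
            MeasureTheory.integral_const_mul, intNormSq, hμ]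
        rw [hint] at hpos
        have h16 : Ω^2 * (Real.pi * ε^2) ≤ 16 := (le_div_iff₀ (by positivity)).mp hΩ2
        nlinarith [h16]
    refine ⟨hformula hm, hm, ?_⟩
    -- a.e. positivity
    have hae : ∀ᵐ x ∂(volume : Measure E2), x ≠ (0:E2) := by
      rw [ae_iff]
      simpa using measure_singleton (0:E2)
    refine ae_restrict_of_ae ?_
    filter_upwards [hae] with x hx
    rcases eq_or_lt_of_le hm with hm0 | hmpos
    · have hΩpos : 0 < Ω := by
        by_contra h
        push_neg at h
        have hΩ0 : Ω = 0 := le_antisymm h hΩ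
        have := hformula hm
        rw [hΩ0, ← hm0] at this
        simp at this
        have h2 : (0:ℝ) < 2/(Real.pi*ε^2) := by positivity
        linarith
      have hn : 0 < ‖x‖ := norm_pos_iff.2 hx
      rw [rhoTF2, ← hm0]
      have : 0 < 0 + Ω ^ 2 / 4 * ‖x‖ ^ 2 := by positivity
      rw [max_eq_left this.le]
      positivity
    · rw [rhoTF2]
      have : 0 < μ + Ω ^ 2 / 4 * ‖x‖ ^ 2 := by positivity
      rw [max_eq_left this.le]
      positivity
  · intro hlt
    have hΩpos : 0 < Ω := hbpos.trans hlt
    have hm : μ < 0 := by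
      by_contra h
      push_neg at h
      have hform := hformula h
      have hΩ2 : 16 / (Real.pi * ε^2) < Ω^2 := by
        calc 16 / (Real.pi * ε^2) = (4 / (Real.sqrt Real.pi * ε))^2 := hsq.symm
          _ < Ω^2 := by exact pow_lt_pow_left₀ hlt hbpos.le (by norm_num)
      rw [hform] at h
      have h8 : 16/(Real.pi*ε^2)/8 = 2/(Real.pi*ε^2) := by ring
      linarith
    refine ⟨hm, fun x hx => ?_⟩
    have hnn : 0 ≤ ‖x‖ := norm_nonneg x
    have h1 : ‖x‖ * Ω < 2 * Real.sqrt (-μ) := by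
      exact (lt_div_iff₀ hΩpos).mp hx
    have h2 : (‖x‖ * Ω)^2 < (2 * Real.sqrt (-μ))^2 := by
      apply pow_lt_pow_left₀ h1 (by positivity) (by norm_num)
    have h3 : (2 * Real.sqrt (-μ))^2 = 4 * (-μ) := by
      rw [mul_pow, Real.sq_sqrt (by linarith)]
      ring
    have h4 : μ + Ω ^ 2 / 4 * ‖x‖ ^ 2 ≤ 0 := by nlinarith
    rw [rhoTF2, max_eq_right h4]
    ring
end
end
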